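/- Let N ≥ 2 and let a_1, …, a_N be vectors in a complex inner product space E with norm ‖·‖ induced by the inner product. Then ∑_{i=1}^N ‖a_i‖² ≥ (1/(2N − 2)) · [ (2/(N(N − 1))) · (∑_{1 ≤ i < j ≤ N} ‖a_i + a_j‖)² + ∑_{1 ≤ i < j ≤ N} ‖a_i − a_j‖² ]. -/

import Mathlib

open Finset

lemma swap_pair_sum {N : ℕ} (f : Fin N × Fin N → ℝ) :
    ∑ p ∈ univ.filter (fun p : Fin N × Fin N => p.1 < p.2), f p
      = ∑ p ∈ univ.filter (fun p : Fin N × Fin N => p.2 < p.1), f p.swap := by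
  apply Finset.sum_nbij' (fun p => p.swap) (fun p => p.swap) <;> simp [Prod.swap]

lemma pair_sum {N : ℕ} (f : Fin N → ℝ) :
    ∑ p ∈ univ.filter (fun p : Fin N × Fin N => p.1 < p.2), (f p.1 + f p.2)
      = ((N : ℝ) - 1) * ∑ i, f i := by
  rw [Finset.sum_add_distrib]
  have h2 : ∑ p ∈ univ.filter (fun p : Fin N × Fin N => p.1 < p.2), f p.2
      = ∑ p ∈ univ.filter (fun p : Fin N × Fin N => p.2 < p.1), f p.1 := by
    rw [swap_pair_sum (fun p => f p.2)]; rfl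
  rw [h2]
  have hdisj : Disjoint (univ.filter (fun p : Fin N × Fin N => p.1 < p.2))
      (univ.filter (fun p : Fin N × Fin N => p.2 < p.1)) := by
    rw [Finset.disjoint_filter]
    intro p _ h1 h3
    exact absurd h1 (not_lt_of_gt h3)
  have hunion : (univ.filter (fun p : Fin N × Fin N => p.1 < p.2))
      ∪ (univ.filter (fun p : Fin N × Fin N => p.2 < p.1))
      = univ.filter (fun p : Fin N × Fin N => p.1 ≠ p.2) := by
    rw [← Finset.filter_or]
    apply Finset.filter_congr
    intro p _
    simp [lt_or_lt_iff_ne]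
  rw [← Finset.sum_union hdisj, hunion, Finset.sum_filter, Fintype.sum_prod_type]
  have key : ∀ i : Fin N, ∑ j : Fin N, (if i ≠ j then f i else 0)
      = ((N : ℝ) - 1) * f i := by
    intro i
    have step : ∀ j : Fin N, (if i ≠ j then f i else 0)
        = f i - (if j = i then f i else 0) := by
      intro j
      by_cases h : i = j <;> simp [h, eq_comm]
    simp only [step, Finset.sum_sub_distrib, Finset.sum_const, Finset.card_univ,
      Fintype.card_fin, nsmul_eq_mul, Finset.sum_ite_eq' Finset.univ i (fun _ => f i),
      Finset.mem_univ, if_true]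
    ring
  rw [Finset.sum_congr rfl (fun i _ => key i), ← Finset.mul_sum]

lemma card_pairs {N : ℕ} :
    ((univ.filter (fun p : Fin N × Fin N => p.1 < p.2)).card : ℝ)
      = (N : ℝ) * ((N : ℝ) - 1) / 2 := by
  have := pair_sum (N := N) (fun _ => (1 : ℝ))
  simp only [Finset.sum_const, Finset.card_univ, Fintype.card_fin, nsmul_eq_mul,
    mul_one] at this
  have h2 : ((univ.filter (fun p : Fin N × Fin N => p.1 < p.2)).card : ℝ) * 2
      = ((N : ℝ) - 1) * N := by
    rw [← this]; push_cast; ring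
  linarith

open Finset in
theorem sum_sq_norm_ge_plus {E : Type*} [NormedAddCommGroup E] [InnerProductSpace ℂ E]
    (N : ℕ) (hN : 2 ≤ N) (a : Fin N → E) :
    ∑ i, ‖a i‖ ^ 2 ≥
      (1 / (2 * (N : ℝ) - 2)) *
        ((2 / ((N : ℝ) * ((N : ℝ) - 1))) *
            (∑ p ∈ univ.filter (fun p : Fin N × Fin N => p.1 < p.2), ‖a p.1 + a p.2‖) ^ 2 +
          ∑ p ∈ univ.filter (fun p : Fin N × Fin N => p.1 < p.2), ‖a p.1 - a p.2‖ ^ 2) := by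
  have hN' : (2 : ℝ) ≤ (N : ℝ) := by exact_mod_cast hN
  set S := univ.filter (fun p : Fin N × Fin N => p.1 < p.2) with hS
  set A := ∑ p ∈ S, ‖a p.1 + a p.2‖ with hA
  set B := ∑ p ∈ S, ‖a p.1 + a p.2‖ ^ 2 with hB
  set C := ∑ p ∈ S, ‖a p.1 - a p.2‖ ^ 2 with hC
  set T := ∑ i, ‖a i‖ ^ 2 with hT
  have hpos : (0 : ℝ) < (N : ℝ) * ((N : ℝ) - 1) := by nlinarith
  have hpos2 : (0 : ℝ) < 2 * (N : ℝ) - 2 := by linarith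
  -- parallelogram
  have h1 : B + C = 2 * (((N : ℝ) - 1) * T) := by
    rw [hB, hC, ← Finset.sum_add_distrib, hT, ← pair_sum (fun i => ‖a i‖ ^ 2),
      Finset.mul_sum]
    apply Finset.sum_congr rfl
    intro p _
    have := parallelogram_law_with_norm ℂ (a p.1) (a p.2)
    nlinarith [this]
  -- Cauchy–Schwarz
  have h2 : A ^ 2 ≤ ((N : ℝ) * ((N : ℝ) - 1) / 2) * B := by
    have := sq_sum_le_card_mul_sum_sq (s := S)
      (f := fun p => ‖a p.1 + a p.2‖)
    rw [← hA, ← hB] at this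
    calc A ^ 2 ≤ (S.card : ℝ) * B := this
      _ = ((N : ℝ) * ((N : ℝ) - 1) / 2) * B := by rw [hS, card_pairs]
  have hB0 : 0 ≤ B := Finset.sum_nonneg fun p _ => by positivity
  have hstep : (2 / ((N : ℝ) * ((N : ℝ) - 1))) * A ^ 2 + C ≤ B + C := by
    have : (2 / ((N : ℝ) * ((N : ℝ) - 1))) * A ^ 2 ≤ B := by
      rw [div_mul_eq_mul_div, div_le_iff₀ hpos]
      nlinarith
    linarith
  calc (1 / (2 * (N : ℝ) - 2)) * ((2 / ((N : ℝ) * ((N : ℝ) - 1))) * A ^ 2 + C)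
      ≤ (1 / (2 * (N : ℝ) - 2)) * (B + C) := by
        apply mul_le_mul_of_nonneg_left hstep; positivity
    _ = T := by rw [h1, one_div, inv_mul_eq_iff_eq_mul₀ hpos2.ne']; ring
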